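/- Let (p_{(R,α)}(x)) be a state-dependent replacement rule: for each state x ∈ {1,…,n}^N, a probability distribution over replacement events. Suppose u > 0 and the following fixation axiom holds: there exist a site i, an integer m ≥ 1, and replacement events (R_1,α_1),…,(R_m,α_m) such that p_{(R_k,α_k)}(x) > 0 for every k ∈ {1,…,m} and every state x, i ∈ R_k for some k, and α̃_1 ∘ α̃_2 ∘ ⋯ ∘ α̃_m(j) = i for every site j. Then the Markov chain on {1,…,n}^N with transition probabilities P_{x→y} = Σ_{(R,α)} p_{(R,α)}(x) · ∏_{i∈R} ((1−u)·1[y_i = x_{α(i)}] + u/n) · ∏_{i∉R} 1[y_i = x_i] has a unique stationary distribution. -/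

import Mathlib

open Finset

namespace SCT

abbrev Event (N : ℕ) := Finset (Fin N) × (Fin N → Fin N)

/-- The extension `α̃` of the parentage map of a replacement event:
it equals `α` on `R` and the identity off `R`. -/
def extMap {N : ℕ} (E : Event N) : Fin N → Fin N :=
  fun i => if i ∈ E.1 then E.2 i else i

/-- Transition probabilities of the mutation–selection Markov chain on states
`Fin N → Fin n`, for a replacement rule `p` and mutation probability `u`. -/
noncomputable def transMat (N n : ℕ) (p : Event N → ℝ) (u : ℝ)
    (x y : Fin N → Fin n) : ℝ :=
  ∑ E : Event N, p E *
    (∏ i ∈ E.1, ((1 - u) * (if y i = x (E.2 i) then (1:ℝ) else 0) + u / (n:ℝ))) *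
    (∏ i ∈ E.1ᶜ, (if y i = x i then (1:ℝ) else 0))

def IsDist {α : Type*} [Fintype α] (q : α → ℝ) : Prop :=
  (∀ a, 0 ≤ q a) ∧ ∑ a, q a = 1

def IsStationary {N n : ℕ} (P : (Fin N → Fin n) → (Fin N → Fin n) → ℝ)
    (π : (Fin N → Fin n) → ℝ) : Prop :=
  IsDist π ∧ ∀ y, ∑ x, π x * P x y = π y

/-- Fixation axiom: some site `i` can propagate its lineage through the whole
population via finitely many replacement events of positive probability. -/
def FixationAxiom {N : ℕ} (p : Event N → ℝ) : Prop :=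
  ∃ (i : Fin N) (m : ℕ) (E : Fin m → Event N), 1 ≤ m ∧
    (∀ k, 0 < p (E k)) ∧ (∃ k, i ∈ (E k).1) ∧
    ∀ j, ((List.ofFn (fun k => extMap (E k))).foldr (· ∘ ·) id) j = i

/-- Pairwise identity-by-state probability under the distribution `π`. -/
noncomputable def phi2 {N n : ℕ} (π : (Fin N → Fin n) → ℝ) (i j : Fin N) : ℝ :=
  ∑ x, π x * (if x i = x j then (1:ℝ) else 0)

/-- Triple identity-by-state probability under the distribution `π`. -/
noncomputable def phi3 {N n : ℕ} (π : (Fin N → Fin n) → ℝ) (i j k : Fin N) : ℝ :=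
  ∑ x, π x * (if x i = x j ∧ x j = x k then (1:ℝ) else 0)



section Generic

set_option linter.unusedSectionVars false
set_option linter.unusedVariables false

variable {S : Type*} [Fintype S] [DecidableEq S]

def RowStoch (A : Matrix S S ℝ) : Prop :=
  (∀ x y, 0 ≤ A x y) ∧ ∀ x, ∑ y, A x y = 1

lemma RowStoch.mul {A B : Matrix S S ℝ} (hA : RowStoch A) (hB : RowStoch B) :
    RowStoch (A * B) := by
  constructor
  · intro x y
    rw [Matrix.mul_apply]
    exact Finset.sum_nonneg fun z _ => mul_nonneg (hA.1 x z) (hB.1 z y)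
  · intro x
    simp only [Matrix.mul_apply]
    rw [Finset.sum_comm]
    have : ∀ z, ∑ y, A x z * B z y = A x z := by
      intro z
      rw [← Finset.mul_sum, hB.2 z, mul_one]
    simp only [this]
    exact hA.2 x

lemma RowStoch.one : RowStoch (1 : Matrix S S ℝ) := by
  constructor
  · intro x y
    rw [Matrix.one_apply]
    split <;> norm_num
  · intro x
    simp [Matrix.one_apply]

lemma RowStoch.pow {A : Matrix S S ℝ} (hA : RowStoch A) (k : ℕ) : RowStoch (A ^ k) := by
  induction k with
  | zero => simpa using RowStoch.one
  | succ k ih => rw [pow_succ]; exact ih.mul hA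

lemma IsDist.vecMul {q : S → ℝ} (hq : IsDist q) {A : Matrix S S ℝ} (hA : RowStoch A) :
    IsDist (Matrix.vecMul q A) := by
  constructor
  · intro y
    exact Finset.sum_nonneg fun x _ => mul_nonneg (hq.1 x) (hA.1 x y)
  · have : ∑ y, Matrix.vecMul q A y = ∑ x, q x * ∑ y, A x y := by
      simp only [Matrix.vecMul, dotProduct, Finset.mul_sum]
      exact Finset.sum_comm
    rw [this]
    simp only [fun x => hA.2 x, mul_one]
    exact hq.2

lemma contraction_step {A : Matrix S S ℝ} (hA : RowStoch A) (δ : ℝ)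
    (hδ : ∀ x y, δ ≤ A x y) (d : S → ℝ) (hd : ∑ x, d x = 0) :
    ∑ y, |Matrix.vecMul d A y| ≤ (1 - (Fintype.card S : ℝ) * δ) * ∑ x, |d x| := by
  have key : ∀ y, Matrix.vecMul d A y = ∑ x, d x * (A x y - δ) := by
    intro y
    simp only [Matrix.vecMul, dotProduct, mul_sub]
    rw [Finset.sum_sub_distrib, ← Finset.sum_mul, hd, zero_mul, sub_zero]
  calc ∑ y, |Matrix.vecMul d A y| ≤ ∑ y, ∑ x, |d x| * (A x y - δ) := by
        refine Finset.sum_le_sum fun y _ => ?_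
        rw [key y]
        refine (Finset.abs_sum_le_sum_abs _ _).trans ?_
        refine Finset.sum_le_sum fun x _ => ?_
        rw [abs_mul, abs_of_nonneg (sub_nonneg.2 (hδ x y))]
    _ = ∑ x, |d x| * (1 - (Fintype.card S : ℝ) * δ) := by
        rw [Finset.sum_comm]
        refine Finset.sum_congr rfl fun x _ => ?_
        rw [← Finset.mul_sum, Finset.sum_sub_distrib, hA.2 x, Finset.sum_const,
          Finset.card_univ, nsmul_eq_mul]
    _ = (1 - (Fintype.card S : ℝ) * δ) * ∑ x, |d x| := by
        rw [← Finset.sum_mul, mul_comm]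

lemma contraction_pow [Nonempty S] {A : Matrix S S ℝ} (hA : RowStoch A) (δ : ℝ)
    (hδ : ∀ x y, δ ≤ A x y) (hδ0 : 0 ≤ δ) (k : ℕ) {q r : S → ℝ}
    (hq : IsDist q) (hr : IsDist r) :
    ∑ y, |Matrix.vecMul q (A ^ k) y - Matrix.vecMul r (A ^ k) y| ≤
      (1 - (Fintype.card S : ℝ) * δ) ^ k * ∑ x, |q x - r x| := by
  have hκ : 0 ≤ 1 - (Fintype.card S : ℝ) * δ := by
    have x0 : S := Classical.arbitrary S
    have : (Fintype.card S : ℝ) * δ ≤ ∑ y, A x0 y := by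
      rw [← Finset.card_univ, ← nsmul_eq_mul, ← Finset.sum_const]
      exact Finset.sum_le_sum fun y _ => hδ x0 y
    rw [hA.2 x0] at this
    linarith
  induction k generalizing q r with
  | zero =>
    simp [Matrix.vecMul_one]
  | succ k ih =>
    have step : ∀ s : S → ℝ, Matrix.vecMul s (A ^ (k+1)) =
        Matrix.vecMul (Matrix.vecMul s A) (A ^ k) := by
      intro s
      rw [Matrix.vecMul_vecMul, ← pow_succ']
    rw [step q, step r]
    have h1 := ih (hq.vecMul hA) (hr.vecMul hA)
    have h2 : ∑ x, |Matrix.vecMul q A x - Matrix.vecMul r A x| ≤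
        (1 - (Fintype.card S : ℝ) * δ) * ∑ x, |q x - r x| := by
      have hsub : ∀ x, Matrix.vecMul q A x - Matrix.vecMul r A x =
          Matrix.vecMul (q - r) A x := by
        intro x; rw [Matrix.sub_vecMul]; rfl
      simp only [hsub]
      refine contraction_step hA δ hδ (q - r) ?_
      simp only [Pi.sub_apply, Finset.sum_sub_distrib, hq.2, hr.2, sub_self]
    calc ∑ y, |Matrix.vecMul (Matrix.vecMul q A) (A ^ k) y -
          Matrix.vecMul (Matrix.vecMul r A) (A ^ k) y| ≤
        (1 - (Fintype.card S : ℝ) * δ) ^ k *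
          ∑ x, |Matrix.vecMul q A x - Matrix.vecMul r A x| := h1
      _ ≤ (1 - (Fintype.card S : ℝ) * δ) ^ k *
          ((1 - (Fintype.card S : ℝ) * δ) * ∑ x, |q x - r x|) :=
        mul_le_mul_of_nonneg_left h2 (pow_nonneg hκ k)
      _ = (1 - (Fintype.card S : ℝ) * δ) ^ (k+1) * ∑ x, |q x - r x| := by ring

theorem exists_unique_stationary [Nonempty S] (M : Matrix S S ℝ) (hM : RowStoch M)
    (m : ℕ) (δ : ℝ) (hδ0 : 0 < δ) (hδ : ∀ x y, δ ≤ (M ^ m) x y) :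
    ∃! π : S → ℝ, IsDist π ∧ ∀ y, ∑ x, π x * M x y = π y := by
  classical
  have hvm : ∀ (q : S → ℝ) (A : Matrix S S ℝ) (y : S),
      Matrix.vecMul q A y = ∑ x, q x * A x y := by
    intro q A y
    simp [Matrix.vecMul, dotProduct]
  have hcard : 0 < (Fintype.card S : ℝ) := by
    exact_mod_cast Fintype.card_pos
  set κ : ℝ := 1 - (Fintype.card S : ℝ) * δ with hκdef
  have hκ0 : 0 ≤ κ := by
    have x0 : S := Classical.arbitrary S
    have h1 : (Fintype.card S : ℝ) * δ ≤ ∑ y, (M ^ m) x0 y := by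
      rw [← Finset.card_univ, ← nsmul_eq_mul, ← Finset.sum_const]
      exact Finset.sum_le_sum fun y _ => hδ x0 y
    rw [(hM.pow m).2 x0] at h1
    simp only [hκdef]; linarith
  have hκ1 : κ < 1 := by
    have := mul_pos hcard hδ0
    simp only [hκdef]; linarith
  obtain ⟨K, hK⟩ : ∃ K : ℕ, κ ^ K < 1 / (Fintype.card S : ℝ) :=
    exists_pow_lt_of_lt_one (by positivity) hκ1
  set R : Matrix S S ℝ := M ^ (m * K) with hRdef
  have hR : RowStoch R := hM.pow _
  -- the complete space of distributions
  have hclosed : IsClosed {q : S → ℝ | IsDist q} := by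
    have hset : {q : S → ℝ | IsDist q} =
        (⋂ a, {q : S → ℝ | 0 ≤ q a}) ∩ {q : S → ℝ | ∑ a, q a = 1} := by
      ext q; simp [IsDist, Set.mem_iInter]
    rw [hset]
    exact IsClosed.inter
      (isClosed_iInter fun a => isClosed_le continuous_const (continuous_apply a))
      (isClosed_eq (continuous_finset_sum _ fun a _ => continuous_apply a) continuous_const)
  haveI : CompleteSpace {q : S → ℝ // IsDist q} := hclosed.completeSpace_coe
  haveI : Nonempty {q : S → ℝ // IsDist q} := by
    refine ⟨⟨fun a => if a = Classical.arbitrary S then 1 else 0, ?_, ?_⟩⟩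
    · intro a; dsimp only; split <;> norm_num
    · simp
  -- the map
  set F : {q : S → ℝ // IsDist q} → {q : S → ℝ // IsDist q} :=
    fun q => ⟨Matrix.vecMul q.1 R, q.2.vecMul hR⟩ with hFdef
  have hcnn : 0 ≤ κ ^ K * (Fintype.card S : ℝ) :=
    mul_nonneg (pow_nonneg hκ0 K) hcard.le
  set c : NNReal := ⟨κ ^ K * (Fintype.card S : ℝ), hcnn⟩ with hcdef
  have hc1 : c < 1 := by
    rw [← NNReal.coe_lt_coe]
    show κ ^ K * (Fintype.card S : ℝ) < (1 : ℝ)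
    calc κ ^ K * (Fintype.card S : ℝ) < (1 / (Fintype.card S : ℝ)) * (Fintype.card S : ℝ) :=
          mul_lt_mul_of_pos_right hK hcard
      _ = 1 := by field_simp
  have hlip : LipschitzWith c F := by
    refine LipschitzWith.of_dist_le_mul fun q r => ?_
    rw [Subtype.dist_eq]
    refine (dist_pi_le_iff (mul_nonneg c.2 dist_nonneg)).2 fun y => ?_
    have h1 : dist ((F q).1 y) ((F r).1 y) ≤
        ∑ y', |Matrix.vecMul q.1 R y' - Matrix.vecMul r.1 R y'| := by
      rw [Real.dist_eq]
      exact Finset.single_le_sum (f := fun y' =>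
        |Matrix.vecMul q.1 R y' - Matrix.vecMul r.1 R y'|)
        (fun _ _ => abs_nonneg _) (Finset.mem_univ y)
    have h2 : ∑ y', |Matrix.vecMul q.1 R y' - Matrix.vecMul r.1 R y'| ≤
        κ ^ K * ∑ x, |q.1 x - r.1 x| := by
      have : R = (M ^ m) ^ K := by rw [hRdef, pow_mul]
      rw [this]
      exact contraction_pow (hM.pow m) δ hδ hδ0.le K q.2 r.2
    have h3 : ∑ x, |q.1 x - r.1 x| ≤ (Fintype.card S : ℝ) * dist q.1 r.1 := by
      rw [← Finset.card_univ, ← nsmul_eq_mul, ← Finset.sum_const]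
      refine Finset.sum_le_sum fun x _ => ?_
      rw [← Real.dist_eq]
      exact dist_le_pi_dist q.1 r.1 x
    calc dist ((F q).1 y) ((F r).1 y) ≤ κ ^ K * ∑ x, |q.1 x - r.1 x| := h1.trans h2
      _ ≤ κ ^ K * ((Fintype.card S : ℝ) * dist q.1 r.1) :=
          mul_le_mul_of_nonneg_left h3 (pow_nonneg hκ0 K)
      _ = (c : ℝ) * dist q.1 r.1 := by rw [show (c : ℝ) = κ ^ K * (Fintype.card S : ℝ) from rfl]; ring
  have hcontr : ContractingWith c F := ⟨hc1, hlip⟩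
  set π₀ := hcontr.fixedPoint F with hπ₀def
  have hfix0 : Matrix.vecMul π₀.1 R = π₀.1 :=
    congrArg Subtype.val (hcontr.fixedPoint_isFixedPt)
  -- any stationary distribution is a fixed point of F
  have hstatR : ∀ π : S → ℝ, IsDist π → Matrix.vecMul π M = π → Matrix.vecMul π R = π := by
    intro π hπ hst
    have hpow : ∀ k : ℕ, Matrix.vecMul π (M ^ k) = π := by
      intro k
      induction k with
      | zero => simp [Matrix.vecMul_one]
      | succ k ih =>
        rw [pow_succ', ← Matrix.vecMul_vecMul, hst, ih]
    exact hpow (m * K)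
  have huniq : ∀ π : S → ℝ, IsDist π → Matrix.vecMul π M = π → π = π₀.1 := by
    intro π hπ hst
    have : F ⟨π, hπ⟩ = ⟨π, hπ⟩ := Subtype.ext (hstatR π hπ hst)
    exact congrArg Subtype.val (hcontr.fixedPoint_unique this)
  -- π₀ is stationary for M
  have hstat0 : Matrix.vecMul π₀.1 M = π₀.1 := by
    set π₁ := Matrix.vecMul π₀.1 M with hπ₁def
    have hπ₁ : IsDist π₁ := π₀.2.vecMul hM
    have hfp : F ⟨π₁, hπ₁⟩ = ⟨π₁, hπ₁⟩ := by
      apply Subtype.ext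
      show Matrix.vecMul π₁ R = π₁
      rw [hπ₁def, Matrix.vecMul_vecMul, ← pow_mul_comm', ← Matrix.vecMul_vecMul, hfix0]
    exact congrArg Subtype.val (hcontr.fixedPoint_unique hfp)
  refine ⟨π₀.1, ⟨π₀.2, fun y => ?_⟩, fun π hπ => ?_⟩
  · rw [← hvm]; rw [hstat0]
  · exact huniq π hπ.1 (funext fun y => by rw [hvm]; exact hπ.2 y)

end Generic

section Inst

variable {N n : ℕ}

lemma factor_nonneg {u : ℝ} (hu0 : 0 < u) (hu1 : u ≤ 1) (hn : 1 ≤ n) (b : Prop) [Decidable b] :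
    0 ≤ (1 - u) * (if b then (1:ℝ) else 0) + u / (n:ℝ) := by
  have hnp : (0:ℝ) < n := by exact_mod_cast hn
  have : (0:ℝ) ≤ (1 - u) * (if b then (1:ℝ) else 0) := by
    refine mul_nonneg (by linarith) ?_
    split <;> norm_num
  have := div_pos hu0 hnp
  linarith

lemma factor_pos {u : ℝ} (hu0 : 0 < u) (hu1 : u ≤ 1) (hn : 1 ≤ n) (b : Prop) [Decidable b] :
    0 < (1 - u) * (if b then (1:ℝ) else 0) + u / (n:ℝ) := by
  have hnp : (0:ℝ) < n := by exact_mod_cast hn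
  have h1 : (0:ℝ) ≤ (1 - u) * (if b then (1:ℝ) else 0) := by
    refine mul_nonneg (by linarith) ?_
    split <;> norm_num
  have := div_pos hu0 hnp
  linarith

lemma transMat_nonneg {u : ℝ} (hu0 : 0 < u) (hu1 : u ≤ 1) (hn : 1 ≤ n)
    (p : Event N → ℝ) (hp : ∀ E, 0 ≤ p E) (x y : Fin N → Fin n) :
    0 ≤ transMat N n p u x y := by
  refine Finset.sum_nonneg fun E _ => ?_
  refine mul_nonneg (mul_nonneg (hp E) ?_) ?_
  · exact Finset.prod_nonneg fun i _ => factor_nonneg hu0 hu1 hn _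
  · refine Finset.prod_nonneg fun i _ => ?_
    split <;> norm_num

lemma transMat_rowsum {u : ℝ} (hu0 : 0 < u) (hu1 : u ≤ 1) (hn : 1 ≤ n)
    (p : Event N → ℝ) (hp : IsDist p) (x : Fin N → Fin n) :
    ∑ y, transMat N n p u x y = 1 := by
  classical
  have hnne : (n:ℝ) ≠ 0 := by
    have : (0:ℝ) < n := by exact_mod_cast hn
    linarith
  unfold transMat
  rw [Finset.sum_comm]
  have key : ∀ E : Event N,
      (∑ y : Fin N → Fin n,
        p E * (∏ i ∈ E.1, ((1 - u) * (if y i = x (E.2 i) then (1:ℝ) else 0) + u / (n:ℝ))) *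
          (∏ i ∈ E.1ᶜ, (if y i = x i then (1:ℝ) else 0))) = p E := by
    intro E
    set h : Fin N → Fin n → ℝ := fun i c =>
      if i ∈ E.1 then ((1 - u) * (if c = x (E.2 i) then (1:ℝ) else 0) + u / (n:ℝ))
      else (if c = x i then (1:ℝ) else 0) with hh
    have hprod : ∀ y : Fin N → Fin n,
        (∏ i ∈ E.1, ((1 - u) * (if y i = x (E.2 i) then (1:ℝ) else 0) + u / (n:ℝ))) *
          (∏ i ∈ E.1ᶜ, (if y i = x i then (1:ℝ) else 0)) = ∏ i, h i (y i) := by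
      intro y
      rw [← Finset.prod_mul_prod_compl E.1 (fun i => h i (y i))]
      congr 1
      · exact Finset.prod_congr rfl fun i hi => by simp [hh, hi]
      · refine Finset.prod_congr rfl fun i hi => ?_
        rw [Finset.mem_compl] at hi
        simp [hh, hi]
    have hsum1 : ∀ i, ∑ c : Fin n, h i c = 1 := by
      intro i
      by_cases hi : i ∈ E.1
      · simp only [hh, if_pos hi]
        rw [Finset.sum_add_distrib, ← Finset.mul_sum, Finset.sum_ite_eq' univ (x (E.2 i))
          (fun _ => (1:ℝ))]
        simp only [Finset.mem_univ, if_pos, Finset.sum_const, Finset.card_univ,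
          Fintype.card_fin, nsmul_eq_mul]
        field_simp
        ring
      · simp only [hh, if_neg hi]
        rw [Finset.sum_ite_eq' univ (x i) (fun _ => (1:ℝ))]
        simp
    calc (∑ y : Fin N → Fin n,
          p E * (∏ i ∈ E.1, ((1 - u) * (if y i = x (E.2 i) then (1:ℝ) else 0) + u / (n:ℝ))) *
            (∏ i ∈ E.1ᶜ, (if y i = x i then (1:ℝ) else 0)))
        = p E * ∑ y : Fin N → Fin n, ∏ i, h i (y i) := by
          rw [Finset.mul_sum]
          exact Finset.sum_congr rfl fun y _ => by rw [mul_assoc, hprod y]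
      _ = p E * ∏ i, ∑ c : Fin n, h i c := by rw [Fintype.prod_sum]
      _ = p E := by
          simp only [hsum1]
          simp
  simp only [key]
  exact hp.2


lemma pow_nonneg_entries {S : Type*} [Fintype S] [DecidableEq S] {A : Matrix S S ℝ}
    (h : ∀ x y, 0 ≤ A x y) (k : ℕ) : ∀ x y, 0 ≤ (A ^ k) x y := by
  induction k with
  | zero =>
    intro x y
    rw [pow_zero, Matrix.one_apply]
    split <;> norm_num
  | succ k ih =>
    intro x y
    rw [pow_succ, Matrix.mul_apply]
    exact Finset.sum_nonneg fun z _ => mul_nonneg (ih x z) (h z y)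

lemma step_pos {u : ℝ} (hu0 : 0 < u) (hu1 : u ≤ 1) (hn : 1 ≤ n)
    (p : Event N → ℝ) (hp : ∀ E, 0 ≤ p E)
    (x y : Fin N → Fin n) (E : Event N) (hE : 0 < p E)
    (hy : ∀ i ∉ E.1, y i = x i) : 0 < transMat N n p u x y := by
  have hterm : 0 < p E *
      (∏ i ∈ E.1, ((1 - u) * (if y i = x (E.2 i) then (1:ℝ) else 0) + u / (n:ℝ))) *
      (∏ i ∈ E.1ᶜ, (if y i = x i then (1:ℝ) else 0)) := by
    have h2 : (∏ i ∈ E.1ᶜ, (if y i = x i then (1:ℝ) else 0)) = 1 :=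
      Finset.prod_eq_one fun i hi => by rw [if_pos (hy i (Finset.mem_compl.1 hi))]
    rw [h2, mul_one]
    exact mul_pos hE (Finset.prod_pos fun i _ => factor_pos hu0 hu1 hn _)
  refine lt_of_lt_of_le hterm ?_
  refine Finset.single_le_sum (f := fun E' => p E' *
      (∏ i ∈ E'.1, ((1 - u) * (if y i = x (E'.2 i) then (1:ℝ) else 0) + u / (n:ℝ))) *
      (∏ i ∈ E'.1ᶜ, (if y i = x i then (1:ℝ) else 0))) (fun E' _ => ?_) (Finset.mem_univ E)
  refine mul_nonneg (mul_nonneg (hp E') ?_) ?_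
  · exact Finset.prod_nonneg fun i _ => factor_nonneg hu0 hu1 hn _
  · refine Finset.prod_nonneg fun i _ => ?_
    split <;> norm_num

lemma chain_pos {u : ℝ} (hu0 : 0 < u) (hu1 : u ≤ 1) (hn : 1 ≤ n)
    (p : (Fin N → Fin n) → Event N → ℝ) (hp : ∀ x, IsDist (p x)) :
    ∀ (l : List (Event N)), (∀ E ∈ l, ∀ x, 0 < p x E) →
    ∀ x y : Fin N → Fin n, (∀ j, (∀ E ∈ l, j ∉ E.1) → y j = x j) →
    0 < ((Matrix.of fun x y => transMat N n (p x) u x y) ^ l.length) x y := by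
  intro l
  induction l with
  | nil =>
    intro _ x y hxy
    have hyx : y = x := funext fun j => hxy j (by simp)
    subst hyx
    simp [Matrix.one_apply_eq]
  | cons E t ih =>
    intro hl x y hxy
    have hlen : (E :: t).length = t.length + 1 := rfl
    rw [hlen, pow_succ', Matrix.mul_apply]
    set z : Fin N → Fin n := fun i => if i ∈ E.1 then y i else x i with hz
    have h1 : 0 < (Matrix.of fun x y => transMat N n (p x) u x y) x z := by
      show 0 < transMat N n (p x) u x z
      refine step_pos hu0 hu1 hn (p x) (hp x).1 x z E (hl E List.mem_cons_self x) ?_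
      intro i hi
      simp [hz, hi]
    have h2 : 0 < ((Matrix.of fun x y => transMat N n (p x) u x y) ^ t.length) z y := by
      refine ih (fun E' hE' => hl E' (List.mem_cons_of_mem _ hE')) z y ?_
      intro j hj
      by_cases hjE : j ∈ E.1
      · simp [hz, hjE]
      · have hyj : y j = x j := by
          refine hxy j ?_
          intro E' hE'
          rcases List.mem_cons.1 hE' with h | h
          · rwa [h]
          · exact hj E' h
        simp [hz, hjE, hyj]
    have hnn : ∀ w, 0 ≤ (Matrix.of fun x y => transMat N n (p x) u x y) x w *
        ((Matrix.of fun x y => transMat N n (p x) u x y) ^ t.length) w y := by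
      intro w
      refine mul_nonneg ?_ ?_
      · exact transMat_nonneg hu0 hu1 hn (p x) (hp x).1 x w
      · exact pow_nonneg_entries
          (fun a b => transMat_nonneg hu0 hu1 hn (p a) (hp a).1 a b) t.length w y
    exact Finset.sum_pos' (fun w _ => hnn w) ⟨z, Finset.mem_univ z, mul_pos h1 h2⟩

lemma foldr_fix {A : Type*} (j : A) :
    ∀ (L : List (A → A)), (∀ g ∈ L, g j = j) → (L.foldr (· ∘ ·) id) j = j
  | [], _ => rfl
  | g :: L, h => by
      have h1 : ((g :: L).foldr (· ∘ ·) id) j = g ((L.foldr (· ∘ ·) id) j) := rfl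
      rw [h1, foldr_fix j L (fun g' hg' => h g' (List.mem_cons_of_mem _ hg'))]
      exact h g List.mem_cons_self

end Inst

/-- under the fixation axiom (uniformly in the state) and `u > 0`,
the mutation–selection Markov chain for a state-dependent replacement rule has
a unique stationary distribution. -/
theorem stmt18 (N n : ℕ) (hN : 1 ≤ N) (hn : 1 ≤ n)
    (p : (Fin N → Fin n) → Event N → ℝ)
    (hp : ∀ x, IsDist (p x))
    (u : ℝ) (hu0 : 0 < u) (hu1 : u ≤ 1)
    (hfix : ∃ (i : Fin N) (m : ℕ) (E : Fin m → Event N), 1 ≤ m ∧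
      (∀ k (x : Fin N → Fin n), 0 < p x (E k)) ∧ (∃ k, i ∈ (E k).1) ∧
      ∀ j, ((List.ofFn (fun k => extMap (E k))).foldr (· ∘ ·) id) j = i) :
    ∃! π : (Fin N → Fin n) → ℝ,
      IsStationary (fun x y => transMat N n (p x) u x y) π := by
  classical
  obtain ⟨i, m, E, hm, hEpos, hEi, hEcomp⟩ := hfix
  haveI : Nonempty (Fin N → Fin n) := ⟨fun _ => ⟨0, hn⟩⟩
  set P : Matrix (Fin N → Fin n) (Fin N → Fin n) ℝ :=
    Matrix.of fun x y => transMat N n (p x) u x y with hPdef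
  have hP : RowStoch P :=
    ⟨fun x y => transMat_nonneg hu0 hu1 hn (p x) (hp x).1 x y,
     fun x => transMat_rowsum hu0 hu1 hn (p x) (hp x) x⟩
  -- every site is covered by some event of the list
  set l : List (Event N) := List.ofFn E with hldef
  have hnotall : ∀ j, ¬ (∀ Ev ∈ l, j ∉ Ev.1) := by
    intro j hcontra
    have hfixj : ∀ g ∈ List.ofFn (fun k => extMap (E k)), g j = j := by
      intro g hg
      obtain ⟨k, rfl⟩ := List.mem_ofFn.1 hg
      have hjk : j ∉ (E k).1 := hcontra (E k) (List.mem_ofFn.2 ⟨k, rfl⟩)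
      simp [extMap, hjk]
    have hji : j = i := by
      have h1 := foldr_fix j _ hfixj
      rw [hEcomp j] at h1
      exact h1.symm
    obtain ⟨k, hk⟩ := hEi
    exact hcontra (E k) (List.mem_ofFn.2 ⟨k, rfl⟩) (hji ▸ hk)
  have hl : ∀ Ev ∈ l, ∀ x, 0 < p x Ev := by
    intro Ev hEv x
    obtain ⟨k, rfl⟩ := List.mem_ofFn.1 hEv
    exact hEpos k x
  have hpos : ∀ x y : Fin N → Fin n, 0 < (P ^ m) x y := by
    intro x y
    have h1 := chain_pos hu0 hu1 hn p hp l hl x y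
      (fun j hj => absurd hj (hnotall j))
    rwa [hldef, List.length_ofFn] at h1
  obtain ⟨b, -, hb⟩ := Finset.exists_min_image
    (Finset.univ : Finset ((Fin N → Fin n) × (Fin N → Fin n)))
    (fun q => (P ^ m) q.1 q.2) Finset.univ_nonempty
  have hthm := exists_unique_stationary P hP m ((P ^ m) b.1 b.2) (hpos b.1 b.2)
    (fun x y => hb (x, y) (Finset.mem_univ _))
  exact hthm


end SCT
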